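/- Let r ≥ 2 and let Φ_{ij} ∈ ℝ^{n×n} be symmetric matrices. If Φ_{ii} is negative definite for all i and (2/(r-1))Φ_{ii} + Φ_{ij} + Φ_{ji} is negative definite for all i ≠ j, then for every i and every subset S ⊆ {1,…,r}\{i}, the matrix Φ_{ii} + (1/2)∑_{j∈S}(Φ_{ij} + Φ_{ji}) is negative definite. -/

import Mathlib

open Matrix

theorem tuan_implies_main_matrix {n r : ℕ} (hr : 2 ≤ r)
    (Φ : Fin r × Fin r → Matrix (Fin n) (Fin n) ℝ)
    (hsymm : ∀ p, (Φ p).IsSymm)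
    (hdiag : ∀ i, ∀ x : Fin n → ℝ, x ≠ 0 → x ⬝ᵥ (Φ (i, i) *ᵥ x) < 0)
    (hoff : ∀ i j, i ≠ j → ∀ x : Fin n → ℝ, x ≠ 0 →
      x ⬝ᵥ (((2 / ((r : ℝ) - 1)) • Φ (i, i) + Φ (i, j) + Φ (j, i)) *ᵥ x) < 0) :
    ∀ i : Fin r, ∀ S : Finset (Fin r), i ∉ S →
      ∀ x : Fin n → ℝ, x ≠ 0 →
        x ⬝ᵥ ((Φ (i, i) + (1 / 2 : ℝ) • ∑ j ∈ S, (Φ (i, j) + Φ (j, i))) *ᵥ x) < 0 := by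
  intro i S hiS x hx
  have hr1 : (0 : ℝ) < (r : ℝ) - 1 := by
    have : (2 : ℝ) ≤ (r : ℝ) := by exact_mod_cast hr
    linarith
  set d : ℝ := x ⬝ᵥ (Φ (i, i) *ᵥ x) with hd
  have hdneg : d < 0 := hdiag i x hx
  set q : Fin r → ℝ := fun j => x ⬝ᵥ ((Φ (i, j) + Φ (j, i)) *ᵥ x) with hq
  have hqbound : ∀ j ∈ S, q j < -(2 / ((r : ℝ) - 1)) * d := by
    intro j hj
    have hij : i ≠ j := fun h => hiS (h ▸ hj)
    have := hoff i j hij x hx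
    simp only [add_mulVec, smul_mulVec, dotProduct_add, dotProduct_smul,
      smul_eq_mul] at this
    simp only [hq, add_mulVec, dotProduct_add]
    linarith
  have hlhs : x ⬝ᵥ ((Φ (i, i) + (1 / 2 : ℝ) • ∑ j ∈ S, (Φ (i, j) + Φ (j, i))) *ᵥ x)
      = d + (1 / 2 : ℝ) * ∑ j ∈ S, q j := by
    simp only [add_mulVec, smul_mulVec, dotProduct_add, dotProduct_smul,
      smul_eq_mul, hd]
    congr 1
    rw [show (∑ j ∈ S, (Φ (i, j) + Φ (j, i))) *ᵥ x = ∑ j ∈ S, (Φ (i, j) + Φ (j, i)) *ᵥ x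
      from map_sum (Matrix.mulVec.addMonoidHomLeft x) _ S]
    simp only [hq, dotProduct, Finset.sum_apply, Finset.mul_sum]
    rw [Finset.sum_comm]
  rw [hlhs]
  rcases S.eq_empty_or_nonempty with h | hSne
  · simp [h, hdneg]
  · have hsum : ∑ j ∈ S, q j < ∑ j ∈ S, -(2 / ((r : ℝ) - 1)) * d :=
      Finset.sum_lt_sum_of_nonempty hSne hqbound
    rw [Finset.sum_const, nsmul_eq_mul] at hsum
    have hcard : (S.card : ℝ) ≤ (r : ℝ) - 1 := by
      have hne : S ≠ Finset.univ := fun h => hiS (h ▸ Finset.mem_univ i)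
      have h2 := Finset.card_lt_card (Finset.ssubset_univ_iff.mpr hne)
      simp only [Finset.card_univ, Fintype.card_fin] at h2
      have h3 : (S.card : ℝ) + 1 ≤ (r : ℝ) := by exact_mod_cast h2
      linarith
    have key : (S.card : ℝ) * (-(2 / ((r : ℝ) - 1)) * d) ≤ -2 * d := by
      have hdiv : 0 ≤ -(2 / ((r : ℝ) - 1)) * d := by
        have : 0 ≤ 2 / ((r : ℝ) - 1) := by positivity
        nlinarith
      calc (S.card : ℝ) * (-(2 / ((r : ℝ) - 1)) * d)
          ≤ ((r : ℝ) - 1) * (-(2 / ((r : ℝ) - 1)) * d) :=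
            mul_le_mul_of_nonneg_right hcard hdiv
        _ = -2 * d := by field_simp
    nlinarith
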